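/- Suppose x_p ∈ {0,1} for every leaf l and every p ∈ DP_l, and ρ_{j,a} ∈ {0,1} for every internal node j and every a ∈ S_j, and that constraints (alpha) and (gamma) hold. If p ∈ DP_l and q ∈ DP_{l'} satisfy x_p = 1 and x_q = 1, then for every common node j ∈ p_BT(l) ∩ p_BT(l') one has s_p(j) = s_q(j); that is, the selected paths are consistent with each other and describe a valid decision tree. -/

import Mathlib

open Finset

attribute [local instance] Classical.propDecidable

/-- The decision paths for a leaf `l` (a Boolean string of length `k`) of the complete
binary tree of depth `k`: a split check, belonging to the candidate set `S j` of the
corresponding node `j = l.take i`, for every depth `i < k`, together with a target in `T`.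
The internal nodes `p_BT(l)` of the path to `l` are exactly the proper prefixes
`l.take i` (`i < k`) of `l`, and the split check assigned by `p` at `l.take i` is `p.1 i`. -/
noncomputable def DP {F T : Type} [Fintype T] (k : ℕ) (S : List Bool → Finset (F × ℝ))
    (l : List Bool) : Finset ((Fin k → F × ℝ) × T) :=
  (Fintype.piFinset fun i : Fin k => S (l.take i.1)) ×ˢ (Finset.univ : Finset T)

/-- If `x, ρ` are binary and satisfy constraints (alpha) and (gamma), then any two
selected paths (`x = 1`) assign the same split check to every common node: for leaves
`l, l'` and a common proper prefix `l.take i = l'.take i`, the split checks assigned at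
that node coincide. That is, the selected paths are consistent and describe a valid
decision tree. -/
theorem stmt4 {F T : Type} [Fintype F] [Nonempty F] [Fintype T] [Nonempty T]
    (k : ℕ) (hk : 1 ≤ k)
    (S : List Bool → Finset (F × ℝ))
    (hS : ∀ j : List Bool, j.length < k → (S j).Nonempty)
    (x : List Bool → (Fin k → F × ℝ) × T → ℝ)
    (ρ : List Bool → F × ℝ → ℝ)
    -- x is binary
    (hxbin : ∀ l : List Bool, l.length = k → ∀ p ∈ DP k S l, x l p = 0 ∨ x l p = 1)
    -- ρ is binary
    (hρbin : ∀ j : List Bool, j.length < k → ∀ a ∈ S j, ρ j a = 0 ∨ ρ j a = 1)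
    -- constraints (alpha)
    (halpha : ∀ l : List Bool, l.length = k → ∑ p ∈ DP k S l, x l p = 1)
    -- constraints (gamma)
    (hgamma : ∀ l : List Bool, l.length = k → ∀ i : Fin k, ∀ a ∈ S (l.take i.1),
      ∑ p ∈ DP k S l, (if p.1 i = a then x l p else 0) = ρ (l.take i.1) a)
    (l l' : List Bool) (hl : l.length = k) (hl' : l'.length = k)
    (p q : (Fin k → F × ℝ) × T)
    (hp : p ∈ DP k S l) (hq : q ∈ DP k S l')
    (hxp : x l p = 1) (hxq : x l' q = 1) :
    ∀ i : Fin k, l.take i.1 = l'.take i.1 → p.1 i = q.1 i := by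
  intro i hil
  by_contra hne
  -- membership facts
  have hpS : p.1 i ∈ S (l.take i.1) := by
    have := (Finset.mem_product.mp hp).1
    exact (Fintype.mem_piFinset.mp this) i
  have hqS : q.1 i ∈ S (l'.take i.1) := by
    have := (Finset.mem_product.mp hq).1
    exact (Fintype.mem_piFinset.mp this) i
  have hpS' : p.1 i ∈ S (l'.take i.1) := hil ▸ hpS
  have hjlen : (l'.take i.1).length < k := by
    rw [List.length_take, hl']
    exact lt_of_le_of_lt (min_le_left _ _) i.2
  -- x nonneg on DP
  have hxnn : ∀ r ∈ DP k S l', 0 ≤ x l' r := fun r hr => by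
    rcases hxbin l' hl' r hr with h | h <;> simp [h]
  have hxnnl : ∀ r ∈ DP k S l, 0 ≤ x l r := fun r hr => by
    rcases hxbin l hl r hr with h | h <;> simp [h]
  -- ρ at p.1 i is 1: via gamma for leaf l
  have hρp : ρ (l.take i.1) (p.1 i) = 1 := by
    have hg := hgamma l hl i (p.1 i) hpS
    have hone : (1:ℝ) ≤ ∑ r ∈ DP k S l, (if r.1 i = p.1 i then x l r else 0) := by
      have := Finset.single_le_sum (f := fun r => if r.1 i = p.1 i then x l r else 0)
        (fun r hr => by split
                        · exact hxnnl r hr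
                        · exact le_refl 0) hp
      simpa [hxp] using this
    rcases hρbin (l.take i.1) (by rw [List.length_take, hl]; exact lt_of_le_of_lt (min_le_left _ _) i.2) (p.1 i) hpS with h | h
    · rw [hg, h] at hone; linarith
    · exact h
  have hρp' : ρ (l'.take i.1) (p.1 i) = 1 := hil ▸ hρp
  -- ρ at q.1 i is 1: via gamma for leaf l'
  have hρq : ρ (l'.take i.1) (q.1 i) = 1 := by
    have hg := hgamma l' hl' i (q.1 i) hqS
    have hone : (1:ℝ) ≤ ∑ r ∈ DP k S l', (if r.1 i = q.1 i then x l' r else 0) := by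
      have := Finset.single_le_sum (f := fun r => if r.1 i = q.1 i then x l' r else 0)
        (fun r hr => by split
                        · exact hxnn r hr
                        · exact le_refl 0) hq
      simpa [hxq] using this
    rcases hρbin (l'.take i.1) hjlen (q.1 i) hqS with h | h
    · rw [hg, h] at hone; linarith
    · exact h
  -- both indicator sums over DP l' equal 1, but disjoint, contradicting alpha
  have hgp := hgamma l' hl' i (p.1 i) hpS'
  have hgq := hgamma l' hl' i (q.1 i) hqS
  have hsum : (2:ℝ) ≤ ∑ r ∈ DP k S l', x l' r := by
    have hle : ∀ r ∈ DP k S l',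
        (if r.1 i = p.1 i then x l' r else 0) + (if r.1 i = q.1 i then x l' r else 0)
          ≤ x l' r := by
      intro r hr
      by_cases h1 : r.1 i = p.1 i
      · have h2 : ¬ r.1 i = q.1 i := fun h => hne (h1 ▸ h ▸ rfl)
        have h3 : ¬ q.1 i = p.1 i := fun h => hne h.symm
        simp [h1, h2, hne, h3]
      · by_cases h2 : r.1 i = q.1 i
        · have h3 : ¬ q.1 i = p.1 i := fun h => hne h.symm
          simp [h1, h2, hne, h3]
        · simpa [h1, h2] using hxnn r hr
    calc (2:ℝ) = ρ (l'.take i.1) (p.1 i) + ρ (l'.take i.1) (q.1 i) := by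
          rw [hρp', hρq]; norm_num
      _ = ∑ r ∈ DP k S l', ((if r.1 i = p.1 i then x l' r else 0)
            + (if r.1 i = q.1 i then x l' r else 0)) := by
          rw [Finset.sum_add_distrib, hgp, hgq]
      _ ≤ ∑ r ∈ DP k S l', x l' r := Finset.sum_le_sum hle
  rw [halpha l' hl'] at hsum
  linarith
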